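/- Fix constants C > 0 and B > 0 and an integer K ≥ 1, and define β(δ) := B/(Cδ²), β_star(p,δ) := B / ln(1/(1 − p + p·exp(−Cδ²))), and β_serial(p,δ,K) := B / ln((1 − p·exp(−Cδ²)) / (1 − p + p·(1 − exp(−Cδ²))·(p·exp(−Cδ²))^K)). Then for every p ∈ (0,1] and δ ∈ (0,1), β_serial(p,δ,K) ≥ β_star(p, √K·δ) ≥ β(√K·δ)/p, where β_star(p,√K·δ) = B / ln(1/(1 − p + p·exp(−C·K·δ²))) and β(√K·δ) = B/(C·K·δ²). -/

import Mathlib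

lemma key9 (p q : ℝ) (hp0 : 0 ≤ p) (hp1 : p ≤ 1) (hq0 : 0 ≤ q) (hq1 : q ≤ 1) :
    ∀ K : ℕ, 1 ≤ K → q ^ K * (1 - p * q) ≤ q * (1 - p) + (1 - q) * (p * q) ^ K := by
  intro K
  induction K with
  | zero => omega
  | succ n ih =>
    intro _
    rcases Nat.eq_zero_or_pos n with h | hn
    · subst h; norm_num; nlinarith
    · have ihn := ih hn
      have hpn : p ^ n ≤ 1 := pow_le_one₀ hp0 hp1
      have hpn0 : 0 ≤ p ^ n := pow_nonneg hp0 n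
      have hqn0 : 0 ≤ q ^ n := pow_nonneg hq0 n
      have hpq : p * q ≤ 1 := by nlinarith
      have hmul : (p * q) ^ n = p ^ n * q ^ n := mul_pow p q n
      have hs1 : q ^ (n + 1) = q * q ^ n := by ring
      have hs2 : (p * q) ^ (n + 1) = p * q * (p * q) ^ n := by ring
      have hinc : 0 ≤ (1 - q) * (1 - p * q) * (q ^ n - (p * q) ^ n) := by
        have h1 : (p * q) ^ n ≤ q ^ n := by
          rw [hmul]; nlinarith
        have h2 : (0:ℝ) ≤ (1 - q) * (1 - p * q) := by nlinarith
        nlinarith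
      rw [hs1, hs2]
      nlinarith [ihn, hinc]

theorem stmt9 (C B : ℝ) (hC : 0 < C) (hB : 0 < B) (K : ℕ) (hK : 1 ≤ K)
    (p δ : ℝ) (hp0 : 0 < p) (hp1 : p ≤ 1) (hδ0 : 0 < δ) (hδ1 : δ < 1) :
    B / Real.log ((1 - p * Real.exp (-C * δ ^ 2)) /
        (1 - p + p * (1 - Real.exp (-C * δ ^ 2)) * (p * Real.exp (-C * δ ^ 2)) ^ K)) ≥
        B / Real.log (1 / (1 - p + p * Real.exp (-C * K * δ ^ 2))) ∧
      B / Real.log (1 / (1 - p + p * Real.exp (-C * K * δ ^ 2))) ≥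
        (B / (C * K * δ ^ 2)) / p := by
  set q : ℝ := Real.exp (-C * δ ^ 2) with hqdef
  have hq0 : 0 < q := Real.exp_pos _
  have hq1 : q < 1 := by
    rw [hqdef, Real.exp_lt_one_iff]
    have : (0:ℝ) < δ ^ 2 := by positivity
    nlinarith
  have hKpos : (0:ℝ) < (K:ℝ) := by exact_mod_cast Nat.pos_of_ne_zero (by omega)
  have ht0 : (0:ℝ) < C * K * δ ^ 2 := by positivity
  have hqK : Real.exp (-C * K * δ ^ 2) = q ^ K := by
    rw [hqdef, ← Real.exp_nat_mul]; ring_nf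
  have hqKlt : q ^ K < 1 := pow_lt_one₀ hq0.le hq1 (by omega)
  have hqK0 : 0 < q ^ K := pow_pos hq0 K
  have hpq1 : p * q < 1 := by nlinarith
  have hN : 0 < 1 - p * q := by linarith
  have hpqK : (p * q) ^ K < 1 := pow_lt_one₀ (by positivity) hpq1 (by omega)
  have hpqK0 : 0 < (p * q) ^ K := pow_pos (by positivity) K
  set D1 : ℝ := 1 - p + p * (1 - q) * (p * q) ^ K with hD1def
  set D2 : ℝ := 1 - p + p * q ^ K with hD2def
  have hD2 : 0 < D2 := by rw [hD2def]; nlinarith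
  have hD2lt : D2 < 1 := by rw [hD2def]; nlinarith
  have hkey := key9 p q hp0.le hp1 hq0.le hq1.le K hK
  have hND : (1 - p * q) * D2 ≤ D1 := by
    rw [hD1def, hD2def]
    nlinarith [mul_pow p q K]
  have hD1 : 0 < D1 := lt_of_lt_of_le (by positivity) hND
  have hND1 : D1 < 1 - p * q := by
    rw [hD1def]
    nlinarith [mul_pos (mul_pos hp0 (by linarith : (0:ℝ) < 1 - q)) (by linarith : (0:ℝ) < 1 - (p*q)^K)]
  rw [hqK]
  set L1 : ℝ := Real.log ((1 - p * q) / D1) with hL1def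
  set L2 : ℝ := Real.log (1 / D2) with hL2def
  have hL1pos : 0 < L1 := Real.log_pos (by rw [one_lt_div hD1]; exact hND1)
  have hL2pos : 0 < L2 := Real.log_pos (by rw [one_lt_div hD2]; exact hD2lt)
  have hL1L2 : L1 ≤ L2 := by
    apply Real.log_le_log (by positivity)
    rw [div_le_div_iff₀ hD1 hD2]
    linarith
  constructor
  · exact div_le_div_of_nonneg_left hB.le hL1pos hL1L2
  · -- convexity: exp(-(p*t)) ≤ (1-p) + p * exp(-t)
    have hconv := convexOn_exp.2 (Set.mem_univ (0:ℝ)) (Set.mem_univ (-(C * K * δ ^ 2)))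
      (by linarith : (0:ℝ) ≤ 1 - p) hp0.le (by ring)
    simp only [smul_eq_mul, mul_zero, mul_neg, zero_add, Real.exp_zero, mul_one] at hconv
    have hqKe : Real.exp (-(C * K * δ ^ 2)) = q ^ K := by
      rw [← hqK]; ring_nf
    rw [hqKe] at hconv
    have hL2le : L2 ≤ C * K * δ ^ 2 * p := by
      rw [hL2def]
      have h1 : (1:ℝ) / D2 ≤ Real.exp (C * K * δ ^ 2 * p) := by
        rw [div_le_iff₀ hD2]
        have h2 : Real.exp (-(C * K * δ ^ 2 * p)) ≤ D2 := by
          rw [hD2def]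
          calc Real.exp (-(C * K * δ ^ 2 * p)) = Real.exp (-((1-p) * (C * K * δ ^ 2) * 0 + p * (C * K * δ ^ 2)) ) := by ring_nf
            _ ≤ 1 - p + p * q ^ K := by
                convert hconv using 2
                · rfl
                · ring
        calc (1:ℝ) = Real.exp (-(C * K * δ ^ 2 * p)) * Real.exp (C * K * δ ^ 2 * p) := by
              rw [← Real.exp_add]; ring_nf; exact (Real.exp_zero).symm
          _ ≤ Real.exp (C * K * δ ^ 2 * p) * D2 := by
              rw [mul_comm (Real.exp (C * K * δ ^ 2 * p)) D2]
              exact mul_le_mul_of_nonneg_right h2 (Real.exp_pos _).le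
      calc Real.log (1 / D2) ≤ Real.log (Real.exp (C * K * δ ^ 2 * p)) :=
            Real.log_le_log (by positivity) h1
        _ = C * K * δ ^ 2 * p := Real.log_exp _
    rw [div_div]
    exact div_le_div_of_nonneg_left hB.le hL2pos hL2le
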